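/- There exists an integer K such that for every integer k ≥ K the following holds: setting r = ⌈10·k·(ln k)³⌉ and n_k = (r+1)^{k−1}, one has k ≤ ln n_k ≤ k·(ln ln n_k + 4·ln ln ln n_k). -/
import Mathlib

/-- There is `K` such that for all `k ≥ K`, with `r = ⌈10·k·(ln k)³⌉` and
`n_k = (r+1)^(k−1)`, one has `k ≤ ln n_k ≤ k·(ln ln n_k + 4·ln ln ln n_k)`. -/
theorem nk_log_bounds :
    ∃ K : ℕ, ∀ k : ℕ, K ≤ k → ∀ r : ℕ, r = ⌈10 * k * Real.log k ^ 3⌉₊ →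
      ∀ n : ℕ, n = (r + 1) ^ (k - 1) →
      (k : ℝ) ≤ Real.log n ∧
        Real.log n ≤ k * (Real.log (Real.log n) + 4 * Real.log (Real.log (Real.log n))) := by
  refine ⟨3 ^ 200, fun k hk r hr n hn => ?_⟩
  have hk2 : 2 ≤ k := le_trans (by norm_num) hk
  have hk1R : (2:ℝ) ≤ (k:ℝ) := by exact_mod_cast hk2
  have hkR : ((3:ℝ)) ^ (200:ℕ) ≤ (k : ℝ) := by
    have h0 : (((3:ℕ) ^ 200 : ℕ):ℝ) ≤ (k:ℝ) := Nat.cast_le.mpr hk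
    rw [Nat.cast_pow] at h0
    exact_mod_cast h0
  set lk := Real.log (k:ℝ) with hlkdef
  have hlog3 : (1:ℝ) ≤ Real.log 3 := by
    rw [Real.le_log_iff_exp_le (by norm_num : (0:ℝ) < 3)]
    exact (Real.exp_one_lt_d9.le.trans (by norm_num))
  have hlk : (200:ℝ) ≤ lk := by
    have h1 : Real.log ((3:ℝ) ^ (200:ℕ)) ≤ lk := Real.log_le_log (by positivity) hkR
    rw [Real.log_pow] at h1
    push_cast at h1
    linarith
  clear hkR hk hlog3
  have hlk0 : (0:ℝ) < lk := by linarith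
  have hlk3 : (1:ℝ) ≤ lk ^ 3 := one_le_pow₀ (by linarith)
  have hr1 : 10 * (k:ℝ) * lk ^ 3 ≤ (r:ℝ) := by
    rw [hr]; exact Nat.le_ceil _
  have hr2 : (r:ℝ) ≤ 10 * (k:ℝ) * lk ^ 3 + 1 := by
    rw [hr]; exact (Nat.ceil_lt_add_one (by positivity)).le
  set L := Real.log ((r:ℝ) + 1) with hLdef
  have hkr : (k:ℝ) ≤ (r:ℝ) + 1 := by nlinarith
  have hLlb : lk ≤ L := Real.log_le_log (by linarith) hkr
  have hlogn : Real.log (n:ℝ) = ((k:ℝ) - 1) * L := by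
    have hcast : (n:ℝ) = ((r:ℝ) + 1) ^ (k - 1) := by rw [hn]; push_cast; ring
    rw [hcast, Real.log_pow, Nat.cast_sub (by omega : 1 ≤ k), Nat.cast_one]
  have hLub : L ≤ Real.log 11 + lk + 3 * Real.log lk := by
    have h1 : (r:ℝ) + 1 ≤ 11 * (k:ℝ) * lk ^ 3 := by nlinarith
    calc L ≤ Real.log (11 * (k:ℝ) * lk ^ 3) := Real.log_le_log (by positivity) h1
      _ = Real.log 11 + lk + 3 * Real.log lk := by
          rw [Real.log_mul (by positivity) (by positivity),
            Real.log_mul (by norm_num) (by positivity), Real.log_pow]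
          push_cast; ring
  have hllk : 7 * Real.log 2 ≤ Real.log lk := by
    have h1 : Real.log ((2:ℝ) ^ (7:ℕ)) ≤ Real.log lk :=
      Real.log_le_log (by positivity) (by norm_num; linarith)
    rwa [Real.log_pow, Nat.cast_ofNat] at h1
  have hlog2pos : (0:ℝ) < Real.log 2 := Real.log_pos (by norm_num)
  have hlog2le1 : Real.log 2 ≤ 1 := by
    have := Real.log_le_sub_one_of_pos (by norm_num : (0:ℝ) < 2); linarith
  have hlog11 : Real.log 11 ≤ 5 * Real.log 2 := by
    have h1 : Real.log (11:ℝ) ≤ Real.log ((2:ℝ) ^ (5:ℕ)) :=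
      Real.log_le_log (by norm_num) (by norm_num)
    rwa [Real.log_pow, Nat.cast_ofNat] at h1
  rw [hlogn]
  set X := ((k:ℝ) - 1) * L with hXdef
  have hL21 : (200:ℝ) ≤ L := le_trans hlk hLlb
  constructor
  · nlinarith
  · have hA : Real.log X = Real.log ((k:ℝ) - 1) + Real.log L := by
      rw [hXdef, Real.log_mul (by linarith) (by linarith)]
    have hlogk1 : lk - Real.log 2 ≤ Real.log ((k:ℝ) - 1) := by
      have h1 : Real.log ((k:ℝ) / 2) ≤ Real.log ((k:ℝ) - 1) :=
        Real.log_le_log (by linarith) (by linarith)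
      rwa [Real.log_div (by linarith) (by norm_num)] at h1
    have hlogL : Real.log lk ≤ Real.log L := Real.log_le_log hlk0 hLlb
    have hllk0 : (0:ℝ) ≤ Real.log lk := Real.log_nonneg (by linarith)
    have hAlb : lk - Real.log 2 + Real.log lk ≤ Real.log X := by
      rw [hA]; linarith
    have hAhalf : lk / 2 ≤ Real.log X := by linarith
    have hB : Real.log lk - Real.log 2 ≤ Real.log (Real.log X) := by
      have h1 : Real.log (lk / 2) ≤ Real.log (Real.log X) :=
        Real.log_le_log (by linarith) hAhalf
      rwa [Real.log_div (by linarith) (by norm_num)] at h1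
    have hLA : L ≤ Real.log X + 4 * Real.log (Real.log X) := by linarith
    calc X ≤ (k:ℝ) * L := by nlinarith
      _ ≤ (k:ℝ) * (Real.log X + 4 * Real.log (Real.log X)) :=
          mul_le_mul_of_nonneg_left hLA (by linarith)
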